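/- In a quantitative reachability game, if a Nash equilibrium σ from v₀ has a Pareto optimal cost profile (minimal in the componentwise order among cost profiles of all plays from v₀), then Cost_i(outcome of σ from v₀) ≤ |V|·|Π| for every player i who visits his target set along the outcome. -/
import Mathlib


open scoped Classical

structure Arena (V : Type) where
  E : V → V → Prop
  succ : ∀ v, ∃ w, E v w

variable {V P : Type}

/-- An infinite play: consecutive vertices are connected by edges. -/
def IsPlay (A : Arena V) (ρ : ℕ → V) : Prop := ∀ k, A.E (ρ k) (ρ (k + 1))

/-- Cost: least index of a visit to `F`, or `⊤` if never visited. -/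
noncomputable def cost (F : Set V) (ρ : ℕ → V) : ℕ∞ :=
  ⨅ (k : ℕ) (_ : ρ k ∈ F), (k : ℕ∞)

/-- Qualitative gain: `1` if the play visits `F`, else `0`. -/
noncomputable def gain (F : Set V) (ρ : ℕ → V) : ℕ :=
  if ∃ n, ρ n ∈ F then 1 else 0

/-- The set of players whose target set is visited along the play. -/
def visit (F : P → Set V) (ρ : ℕ → V) : Set P := {i | ∃ n, ρ n ∈ F i}

/-- The set of players whose target set is visited within the prefix `ρ₀…ρₖ`. -/
def visitPrefix (F : P → Set V) (ρ : ℕ → V) (k : ℕ) : Set P := {i | ∃ n ≤ k, ρ n ∈ F i}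

/-- A multiplayer reachability game: an arena, an owner for each vertex,
and a target set for each player. -/
structure Game (P V : Type) extends Arena V where
  owner : V → P
  F : P → Set V

/-- A strategy maps (past history, current vertex) to the next vertex. -/
abbrev Strat (V : Type) := List V → V → V

def IsStrategy (A : Arena V) (s : Strat V) : Prop := ∀ p v, A.E v (s p v)

noncomputable def histStep (G : Game P V) (σ : P → Strat V) :
    List V × V → List V × V :=
  fun x => (x.1 ++ [x.2], σ (G.owner x.2) x.1 x.2)

/-- The unique play from `v0` consistent with the strategy profile `σ`. -/
noncomputable def outcome (G : Game P V) (σ : P → Strat V) (v0 : V) (k : ℕ) : V :=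
  ((histStep G σ)^[k] ([], v0)).2

/-- Replace the strategy of player `i` by `s` in the profile `σ`. -/
noncomputable def updProfile (σ : P → Strat V) (i : P) (s : Strat V) : P → Strat V :=
  fun j => if j = i then s else σ j

/-- Nash equilibrium for the quantitative (cost-minimizing) semantics. -/
def IsNE (G : Game P V) (σ : P → Strat V) (v0 : V) : Prop :=
  (∀ i, IsStrategy G.toArena (σ i)) ∧
  ∀ (i : P) (s : Strat V), IsStrategy G.toArena s →
    cost (G.F i) (outcome G σ v0) ≤ cost (G.F i) (outcome G (updProfile σ i s) v0)

/-- Nash equilibrium for the qualitative (gain-maximizing) semantics. -/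
def IsNEqual (G : Game P V) (σ : P → Strat V) (v0 : V) : Prop :=
  (∀ i, IsStrategy G.toArena (σ i)) ∧
  ∀ (i : P) (s : Strat V), IsStrategy G.toArena s →
    gain (G.F i) (outcome G (updProfile σ i s) v0) ≤ gain (G.F i) (outcome G σ v0)

/-- The profile in which player `i` plays `s` and all other players (the
coalition `-i`) jointly play `t`. -/
noncomputable def coalProfile (i : P) (s t : Strat V) : P → Strat V :=
  fun j => if j = i then s else t

/-- Value of the coalitional zero-sum game `G_i` from `v`: player `i`
minimizes the first hitting time of `F i` against the coalition. -/
noncomputable def val (G : Game P V) (i : P) (v : V) : ℕ∞ :=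
  ⨅ s : {s : Strat V // IsStrategy G.toArena s},
    ⨆ t : {t : Strat V // IsStrategy G.toArena t},
      cost (G.F i) (outcome G (coalProfile i s.1 t.1) v)

/-- A positional (memoryless) strategy only depends on the current vertex. -/
def Positional (s : Strat V) : Prop := ∀ p q v, s p v = s q v

/-- An optimal strategy for the minimizer (player `i`) in `G_i`. -/
def OptimalMin (G : Game P V) (i : P) (s : Strat V) : Prop :=
  IsStrategy G.toArena s ∧
  ∀ (v : V) (t : Strat V), IsStrategy G.toArena t →
    cost (G.F i) (outcome G (coalProfile i s t) v) ≤ val G i v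

/-- An optimal strategy for the maximizer (the coalition `-i`) in `G_i`. -/
def OptimalMax (G : Game P V) (i : P) (t : Strat V) : Prop :=
  IsStrategy G.toArena t ∧
  ∀ (v : V) (s : Strat V), IsStrategy G.toArena s →
    val G i v ≤ cost (G.F i) (outcome G (coalProfile i s t) v)

/-- `λ`-consistency of a play. -/
def lambdaConsistent (G : Game P V) (lam : V → ℕ∞) (ρ : ℕ → V) : Prop :=
  ∀ (i : P) (k : ℕ), G.owner (ρ k) = i → (∀ n ≤ k, ρ n ∉ G.F i) →
    cost (G.F i) (fun j => ρ (k + j)) ≤ lam (ρ k)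

/-- A lasso `hℓ^ω` of length `|hℓ| ≤ L`. -/
def IsLasso (ρ : ℕ → V) (L : ℕ) : Prop :=
  ∃ n p, 0 < p ∧ n + p ≤ L ∧ ∀ k, n ≤ k → ρ (k + p) = ρ k

/-- The play obtained by removing the cycle `ρₖ…ρₖ₊ₗ` from `ρ`. -/
def removeCycle (ρ : ℕ → V) (k l : ℕ) : ℕ → V :=
  fun j => if j ≤ k then ρ j else ρ (j + l)

/-- `ρₖ…ρₖ₊ₗ` is an unnecessary cycle: it is a (nontrivial) cycle inside of
which no new player visits his target set. -/
def UnnecessaryCycle (F : P → Set V) (ρ : ℕ → V) (k l : ℕ) : Prop :=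
  0 < l ∧ ρ k = ρ (k + l) ∧ visitPrefix F ρ k = visitPrefix F ρ (k + l)

/-- The set of cost profiles of plays from `v0`. -/
def costProfiles (G : Game P V) (v0 : V) : Set (P → ℕ∞) :=
  {c | ∃ ρ, IsPlay G.toArena ρ ∧ ρ 0 = v0 ∧ c = fun i => cost (G.F i) ρ}

/-- The set of gain profiles of plays from `v0`. -/
def gainProfiles (G : Game P V) (v0 : V) : Set (P → ℕ) :=
  {c | ∃ ρ, IsPlay G.toArena ρ ∧ ρ 0 = v0 ∧ c = fun i => gain (G.F i) ρ}

/-- Pareto optimality for cost profiles: minimal in the componentwise order. -/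
def ParetoMinimal {α : Type} [Preorder α] (S : Set α) (p : α) : Prop :=
  p ∈ S ∧ ∀ q ∈ S, q ≤ p → q = p

/-- Pareto optimality for gain profiles: maximal in the componentwise order. -/
def ParetoMaximal {α : Type} [Preorder α] (S : Set α) (p : α) : Prop :=
  p ∈ S ∧ ∀ q ∈ S, p ≤ q → q = p

/-- `h ++ [v]` is a history from `v0`: a finite path starting at `v0`
whose current (last) vertex is `v`; `h` is the strict past. -/
def IsHist (A : Arena V) (v0 : V) (h : List V) (v : V) : Prop :=
  (h ++ [v]).head? = some v0 ∧ List.Chain' A.E (h ++ [v])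

/-- The strategy `s` shifted by the past history `h` (i.e. `s|h`). -/
noncomputable def shiftStrat (s : Strat V) (h : List V) : Strat V :=
  fun p v => s (h ++ p) v

/-- Gain of a play `ρ` in the subgame after past history `h`:
`1` iff `h·ρ` visits `F`. -/
noncomputable def gainAfter (F : Set V) (h : List V) (ρ : ℕ → V) : ℕ :=
  if (∃ x ∈ h, x ∈ F) ∨ (∃ n, ρ n ∈ F) then 1 else 0

/-- Subgame perfect equilibrium for qualitative reachability games:
in every subgame after a history from `v0`, no player can strictly
increase his gain by a unilateral deviation. -/
def IsSPEqual (G : Game P V) (σ : P → Strat V) (v0 : V) : Prop :=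
  (∀ i, IsStrategy G.toArena (σ i)) ∧
  ∀ (h : List V) (v : V), IsHist G.toArena v0 h v →
    ∀ (i : P) (s : Strat V), IsStrategy G.toArena s →
      gainAfter (G.F i) h
          (outcome G (updProfile (fun j => shiftStrat (σ j) h) i s) v) ≤
        gainAfter (G.F i) h (outcome G (fun j => shiftStrat (σ j) h) v)


lemma cost_le_of_mem {V : Type} {F : Set V} {ρ : ℕ → V} {n : ℕ} (h : ρ n ∈ F) :
    cost F ρ ≤ (n : ℕ∞) :=
  iInf_le_of_le n (by simp [h])

lemma cost_eq_find {V : Type} {F : Set V} {ρ : ℕ → V} (h : ∃ n, ρ n ∈ F) :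
    cost F ρ = (Nat.find h : ℕ∞) := by
  refine le_antisymm (cost_le_of_mem (Nat.find_spec h)) ?_
  refine le_iInf fun k => le_iInf fun hk => ?_
  exact_mod_cast Nat.find_min' h hk

lemma outcome_zero {V P : Type} (G : Game P V) (σ : P → Strat V) (v0 : V) :
    outcome G σ v0 0 = v0 := rfl

lemma outcome_isPlay {V P : Type} (G : Game P V) (σ : P → Strat V) (v0 : V)
    (hσ : ∀ i, IsStrategy G.toArena (σ i)) :
    IsPlay G.toArena (outcome G σ v0) := by
  intro k
  have h : outcome G σ v0 (k + 1)
      = σ (G.owner (((histStep G σ)^[k] ([], v0)).2)) (((histStep G σ)^[k] ([], v0)).1)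
          (((histStep G σ)^[k] ([], v0)).2) := by
    simp only [outcome, Function.iterate_succ_apply', histStep]
  rw [show outcome G σ v0 k = ((histStep G σ)^[k] ([], v0)).2 from rfl, h]
  exact hσ _ _ _

lemma visitPrefix_mono {V P : Type} (F : P → Set V) (ρ : ℕ → V) {k k' : ℕ}
    (h : k ≤ k') : visitPrefix F ρ k ⊆ visitPrefix F ρ k' := by
  rintro j ⟨n, hn, hmem⟩
  exact ⟨n, hn.trans h, hmem⟩

/-- an NE with a Pareto optimal cost profile has cost at most
`|V|·|Π|` for every player who visits his target set. -/
theorem stmt12 {V P : Type} [Fintype V] [Fintype P] (G : Game P V) (v0 : V)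
    (σ : P → Strat V) (hNE : IsNE G σ v0)
    (hpar : ParetoMinimal (costProfiles G v0)
      (fun i => cost (G.F i) (outcome G σ v0))) :
    ∀ i ∈ visit G.F (outcome G σ v0),
      cost (G.F i) (outcome G σ v0) ≤
        ((Fintype.card V * Fintype.card P : ℕ) : ℕ∞) := by
  classical
  intro i hi
  set ρ := outcome G σ v0 with hρ
  by_contra hgt
  push_neg at hgt
  set m := Nat.find hi with hmdef
  have hcost : cost (G.F i) ρ = (m : ℕ∞) := cost_eq_find hi
  have hm : Fintype.card V * Fintype.card P < m := by
    rw [hcost] at hgt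
    exact_mod_cast hgt
  have hplay : IsPlay G.toArena ρ := outcome_isPlay G σ v0 hNE.1
  have hmin : ∀ n < m, ρ n ∉ G.F i := fun n hn => Nat.find_min hi hn
  -- each prefix-visit set before time m misses i, so its ncard < card P
  have hSlt : ∀ k < m, (visitPrefix G.F ρ k).ncard < Fintype.card P := by
    intro k hk
    have hne : visitPrefix G.F ρ k ≠ Set.univ := by
      intro h
      have : i ∈ visitPrefix G.F ρ k := h ▸ Set.mem_univ i
      obtain ⟨n, hn, hmem⟩ := this
      exact hmin n (lt_of_le_of_lt hn hk) hmem
    have := Set.ncard_lt_ncard (Set.ssubset_univ_iff.mpr hne) Set.finite_univ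
    simpa [Set.ncard_univ, Nat.card_eq_fintype_card] using this
  -- pigeonhole
  have hP : 0 < Fintype.card P := Fintype.card_pos_iff.mpr ⟨i⟩
  let f : Fin m → V × Fin (Fintype.card P) :=
    fun k => (ρ k, ⟨(visitPrefix G.F ρ k).ncard, hSlt k k.2⟩)
  obtain ⟨a, b, hab, hfab⟩ :=
    Fintype.exists_ne_map_eq_of_card_lt f (by simpa using hm)
  -- extract a repeated (vertex, visit-set) pair with ordered indices
  have key : ∃ k k' : ℕ, k < k' ∧ k' < m ∧ ρ k = ρ k' ∧
      visitPrefix G.F ρ k = visitPrefix G.F ρ k' := by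
    have setEq : ∀ (a b : Fin m), (a : ℕ) ≤ b → f a = f b →
        visitPrefix G.F ρ a = visitPrefix G.F ρ b := by
      intro a b hle hf
      have h2 : (visitPrefix G.F ρ (b : ℕ)).ncard ≤ (visitPrefix G.F ρ (a : ℕ)).ncard := by
        have := congrArg (fun x => (x.2 : ℕ)) hf
        simp only [f] at this
        omega
      exact (Set.eq_of_subset_of_ncard_le (visitPrefix_mono G.F ρ hle) h2
        (Set.toFinite _))
    rcases hab.lt_or_gt with h | h
    · exact ⟨a, b, h, b.2, (Prod.ext_iff.mp hfab).1, setEq a b h.le hfab⟩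
    · exact ⟨b, a, h, a.2, (Prod.ext_iff.mp hfab.symm).1, setEq b a h.le hfab.symm⟩
  obtain ⟨k, k', hkk', hk'm, hvx, hSeq⟩ := key
  set l := k' - k with hl
  have hkl : k + l = k' := by omega
  set ρ' := removeCycle ρ k l with hρ'
  have hρ'le : ∀ j ≤ k, ρ' j = ρ j := by
    intro j hj; simp [hρ', removeCycle, hj]
  have hρ'gt : ∀ j, k < j → ρ' j = ρ (j + l) := by
    intro j hj; simp [hρ', removeCycle, Nat.not_le.mpr hj]
  have hplay' : IsPlay G.toArena ρ' := by
    intro j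
    rcases lt_trichotomy j k with hj | hj | hj
    · rw [hρ'le j hj.le, hρ'le (j + 1) hj]
      exact hplay j
    · subst hj
      rw [hρ'le j le_rfl, hρ'gt (j + 1) (Nat.lt_succ_self j)]
      have : ρ j = ρ (j + l) := by rw [hkl]; exact hvx
      rw [this, show j + 1 + l = (j + l) + 1 by omega]
      exact hplay (j + l)
    · rw [hρ'gt j hj, hρ'gt (j + 1) (hj.trans (Nat.lt_succ_self j)),
        show j + 1 + l = (j + l) + 1 by omega]
      exact hplay (j + l)
  have hρ'0 : ρ' 0 = v0 := by
    rw [hρ'le 0 (Nat.zero_le k)]; rfl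
  have hlpos : 0 < l := by omega
  -- costs do not increase
  have hle : ∀ p : P, cost (G.F p) ρ' ≤ cost (G.F p) ρ := by
    intro p
    by_cases hvis : ∃ n, ρ n ∈ G.F p
    · rw [cost_eq_find hvis]
      set n := Nat.find hvis with hn
      by_cases hnk : n ≤ k
      · have : ρ' n ∈ G.F p := by rw [hρ'le n hnk]; exact Nat.find_spec hvis
        exact cost_le_of_mem this
      · push_neg at hnk
        have hn2 : k + l < n := by
          by_contra hc
          push_neg at hc
          have hmem : p ∈ visitPrefix G.F ρ k' := ⟨n, by omega, Nat.find_spec hvis⟩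
          rw [← hSeq] at hmem
          obtain ⟨n', hn', hmem'⟩ := hmem
          have := Nat.find_min' hvis hmem'
          omega
        have hmem : ρ' (n - l) ∈ G.F p := by
          rw [hρ'gt (n - l) (by omega), Nat.sub_add_cancel (by omega)]
          exact Nat.find_spec hvis
        calc cost (G.F p) ρ' ≤ ((n - l : ℕ) : ℕ∞) := cost_le_of_mem hmem
          _ ≤ (n : ℕ∞) := by exact_mod_cast Nat.sub_le n l
    · push_neg at hvis
      have : cost (G.F p) ρ = ⊤ := by
        simp [cost, hvis]
      rw [this]; exact le_top
  -- player i's cost strictly decreases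
  have hstrict : cost (G.F i) ρ' < cost (G.F i) ρ := by
    have hmem : ρ' (m - l) ∈ G.F i := by
      rw [hρ'gt (m - l) (by omega), Nat.sub_add_cancel (by omega)]
      exact Nat.find_spec hi
    calc cost (G.F i) ρ' ≤ ((m - l : ℕ) : ℕ∞) := cost_le_of_mem hmem
      _ < (m : ℕ∞) := by exact_mod_cast Nat.sub_lt (by omega) hlpos
      _ = cost (G.F i) ρ := hcost.symm
  -- contradiction with Pareto minimality
  have hmem : (fun p => cost (G.F p) ρ') ∈ costProfiles G v0 :=
    ⟨ρ', hplay', hρ'0, rfl⟩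
  have heq := hpar.2 _ hmem (fun p => hle p)
  exact absurd (congrFun heq i) (ne_of_lt hstrict)
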